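/- Let λ_1,...,λ_N ∈ ℂ, z_1,...,z_N distinct complex numbers, and w_1,...,w_m distinct complex numbers disjoint from the z_i. Set u(t) = Σ_{i=1}^N (λ_i/2)/(t−z_i) − Σ_{j=1}^m 1/(t−w_j). Then the rational function v(t) = u(t)² − u'(t) is regular at every point w_j if and only if the sl_2 Bethe Ansatz equations hold: for each j, Σ_{i=1}^N λ_i/(w_j − z_i) − Σ_{s≠j} 2/(w_j − w_s) = 0. -/

import Mathlib

open Topology Filter

private lemma hasDerivAt_div_sub (c a t : ℂ) (h : t ≠ a) :
    HasDerivAt (fun t => c / (t - a)) (-c / (t - a) ^ 2) t := by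
  have h2 : t - a ≠ 0 := sub_ne_zero.mpr h
  have h1 : HasDerivAt (fun t : ℂ => t - a) 1 t := (hasDerivAt_id t).sub_const a
  have h3 := (h1.inv h2).const_mul c
  have he : (fun t : ℂ => c * (t - a)⁻¹) = fun t => c / (t - a) := by
    funext s; rw [div_eq_mul_inv]
  simp only [Pi.inv_apply] at h3
  rw [he] at h3
  rw [show -c / (t - a) ^ 2 = c * (-1 / (t - a) ^ 2) by ring]
  exact h3

private lemma hasDerivAt_sumdiv {ι : Type*} (S : Finset ι) (c p : ι → ℂ) (t : ℂ)
    (h : ∀ i ∈ S, t ≠ p i) :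
    HasDerivAt (fun t => ∑ i ∈ S, c i / (t - p i)) (∑ i ∈ S, -c i / (t - p i) ^ 2) t :=
  HasDerivAt.fun_sum fun i hi => hasDerivAt_div_sub (c i) (p i) t (h i hi)

private lemma div_limit_iff (h : ℂ → ℂ) (a : ℂ) (hd : DifferentiableAt ℂ h a) :
    (∃ c, Tendsto (fun t => h t / (t - a)) (𝓝[≠] a) (𝓝 c)) ↔ h a = 0 := by
  constructor
  · rintro ⟨c, hc⟩
    have hsub : Tendsto (fun t : ℂ => t - a) (𝓝[≠] a) (𝓝 0) := by
      have : Tendsto (fun t : ℂ => t - a) (𝓝 a) (𝓝 (a - a)) :=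
        (continuous_id.sub continuous_const).tendsto a
      simpa using this.mono_left nhdsWithin_le_nhds
    have h1 : Tendsto (fun t => h t / (t - a) * (t - a)) (𝓝[≠] a) (𝓝 (c * 0)) := hc.mul hsub
    have heq : (fun t => h t / (t - a) * (t - a)) =ᶠ[𝓝[≠] a] h := by
      filter_upwards [self_mem_nhdsWithin] with t ht
      exact div_mul_cancel₀ _ (sub_ne_zero.mpr ht)
    have h2 : Tendsto h (𝓝[≠] a) (𝓝 0) := by
      rw [show (0:ℂ) = c * 0 by ring]
      exact Tendsto.congr' heq h1
    have h3 : Tendsto h (𝓝[≠] a) (𝓝 (h a)) := hd.continuousAt.continuousWithinAt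
    exact tendsto_nhds_unique h3 h2
  · intro ha
    refine ⟨deriv h a, ?_⟩
    have h1 := hasDerivAt_iff_tendsto_slope.mp hd.hasDerivAt
    refine h1.congr fun t => ?_
    rw [slope_def_field, ha, sub_zero]

/-- Let `u(t) = Σᵢ (λᵢ/2)/(t−zᵢ) − Σⱼ 1/(t−wⱼ)` with all the points distinct. Then
`v = u² − u'` is regular (extends continuously) at every `wⱼ` if and only if the
`sl₂` Bethe Ansatz equations hold:
`Σᵢ λᵢ/(wⱼ−zᵢ) − Σ_{s≠j} 2/(wⱼ−w_s) = 0` for every `j`. -/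
theorem miura_regular_iff_bethe (N m : ℕ) (lam : Fin N → ℂ) (z : Fin N → ℂ)
    (w : Fin m → ℂ) (hz : Function.Injective z) (hw : Function.Injective w)
    (hzw : ∀ i j, z i ≠ w j)
    (u v : ℂ → ℂ)
    (hu : u = fun t => (∑ i, lam i / 2 / (t - z i)) - ∑ j, 1 / (t - w j))
    (hv : v = fun t => u t ^ 2 - deriv u t) :
    (∀ j, ∃ c : ℂ, Tendsto v (𝓝[≠] (w j)) (𝓝 c)) ↔
      (∀ j, (∑ i, lam i / (w j - z i))
          - ∑ s ∈ Finset.univ.erase j, 2 / (w j - w s) = 0) := by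
  subst hv hu
  refine forall_congr' fun j => ?_
  set G : ℂ → ℂ := fun t =>
    (∑ i, lam i / 2 / (t - z i)) - ∑ s ∈ Finset.univ.erase j, 1 / (t - w s) with hG
  set DG : ℂ → ℂ := fun t =>
    (∑ i, -(lam i / 2) / (t - z i) ^ 2) - ∑ s ∈ Finset.univ.erase j, -1 / (t - w s) ^ 2
    with hDG
  have hwz : ∀ i, w j ≠ z i := fun i => (hzw i j).symm
  have hww : ∀ s, s ≠ j → w j ≠ w s := fun s hs h => hs (hw h.symm)
  -- G is differentiable at w j
  have hGd : HasDerivAt G (DG (w j)) (w j) := by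
    have h1 := hasDerivAt_sumdiv Finset.univ (fun i => lam i / 2) z (w j)
      (fun i _ => hwz i)
    have h2 := hasDerivAt_sumdiv (Finset.univ.erase j) (fun _ => (1:ℂ)) w (w j)
      (fun s hs => hww s (Finset.ne_of_mem_erase hs))
    exact h1.sub h2
  have hGdiff : DifferentiableAt ℂ G (w j) := hGd.differentiableAt
  -- DG is continuous at w j
  have hDGcont : ContinuousAt DG (w j) := by
    rw [hDG]
    apply ContinuousAt.sub
    · refine tendsto_finset_sum _ fun i _ => ?_
      exact continuousAt_const.div (by fun_prop) (pow_ne_zero _ (sub_ne_zero.mpr (hwz i)))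
    · refine tendsto_finset_sum _ fun s hs => ?_
      exact continuousAt_const.div (by fun_prop)
        (pow_ne_zero _ (sub_ne_zero.mpr (hww s (Finset.ne_of_mem_erase hs))))
  -- eventual equality near w j
  have hev : (fun t => ((∑ i, lam i / 2 / (t - z i)) - ∑ s, 1 / (t - w s)) ^ 2 -
        deriv (fun t => (∑ i, lam i / 2 / (t - z i)) - ∑ s, 1 / (t - w s)) t)
      =ᶠ[𝓝[≠] (w j)] fun t => (G t ^ 2 - DG t) - 2 * (G t / (t - w j)) := by
    have h1 : ∀ᶠ t in 𝓝 (w j), (∀ i, t ≠ z i) ∧ ∀ s, s ≠ j → t ≠ w s := by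
      refine Filter.Eventually.and ?_ ?_
      · exact eventually_all.mpr fun i => eventually_ne_nhds (hwz i)
      · rw [eventually_all]
        intro s
        by_cases hs : s = j
        · subst hs; filter_upwards with t ht; exact absurd rfl ht
        · exact (eventually_ne_nhds (hww s hs)).mono fun t ht _ => ht
    filter_upwards [h1.filter_mono nhdsWithin_le_nhds, self_mem_nhdsWithin] with t ht htj
    obtain ⟨htz, htw⟩ := ht
    have htj' : t ≠ w j := htj
    have htwAll : ∀ s, t ≠ w s := fun s => by
      by_cases hs : s = j
      · subst hs; exact htj'
      · exact htw s hs
    have hd0 : t - w j ≠ 0 := sub_ne_zero.mpr htj'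
    -- derivative of u at t
    have hU : HasDerivAt (fun t => (∑ i, lam i / 2 / (t - z i)) - ∑ s, 1 / (t - w s))
        ((∑ i, -(lam i / 2) / (t - z i) ^ 2) - ∑ s, -1 / (t - w s) ^ 2) t := by
      have h1 := hasDerivAt_sumdiv Finset.univ (fun i => lam i / 2) z t
        (fun i _ => htz i)
      have h2 := hasDerivAt_sumdiv Finset.univ (fun _ => (1:ℂ)) w t
        (fun s _ => htwAll s)
      exact h1.sub h2
    rw [hU.deriv]
    -- split the sums over s at j
    have hsplit1 : (∑ s, 1 / (t - w s))
        = 1 / (t - w j) + ∑ s ∈ Finset.univ.erase j, 1 / (t - w s) :=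
      (Finset.add_sum_erase Finset.univ _ (Finset.mem_univ j)).symm
    have hsplit2 : (∑ s, -1 / (t - w s) ^ 2)
        = -1 / (t - w j) ^ 2 + ∑ s ∈ Finset.univ.erase j, -1 / (t - w s) ^ 2 :=
      (Finset.add_sum_erase Finset.univ _ (Finset.mem_univ j)).symm
    rw [hsplit1, hsplit2, hG, hDG]
    field_simp
    ring
  -- the continuous part
  have hK : Tendsto (fun t => G t ^ 2 - DG t) (𝓝[≠] (w j))
      (𝓝 (G (w j) ^ 2 - DG (w j))) :=
    (((hGdiff.continuousAt.pow 2).sub hDGcont)).continuousWithinAt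
  -- Bethe sum equals 2 * G (w j)
  have hBethe : (∑ i, lam i / (w j - z i)) - ∑ s ∈ Finset.univ.erase j, 2 / (w j - w s)
      = 2 * G (w j) := by
    rw [hG, mul_sub, Finset.mul_sum, Finset.mul_sum]
    congr 1
    · exact Finset.sum_congr rfl fun i _ => by ring
    · exact Finset.sum_congr rfl fun s _ => by ring
  rw [hBethe, show ((2:ℂ) * G (w j) = 0) ↔ G (w j) = 0 by
    rw [mul_eq_zero]; simp [two_ne_zero]]
  rw [← div_limit_iff G (w j) hGdiff]
  constructor
  · rintro ⟨c, hc⟩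
    have hc' : Tendsto (fun t => (G t ^ 2 - DG t) - 2 * (G t / (t - w j)))
        (𝓝[≠] (w j)) (𝓝 c) := Tendsto.congr' hev hc
    refine ⟨((G (w j) ^ 2 - DG (w j)) - c) / 2, ?_⟩
    have h2 := (hK.sub hc').div_const 2
    refine h2.congr fun t => ?_
    ring
  · rintro ⟨q, hq⟩
    refine ⟨(G (w j) ^ 2 - DG (w j)) - 2 * q, ?_⟩
    have h2 := hK.sub (hq.const_mul 2)
    exact Tendsto.congr' hev.symm h2
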